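/- For the VSSBDF2 characteristic roots with fixed λ < 0, if the time steps grow so that ω = dt_now/dt_old is bounded and dt_now = t^{n+1} - t^n with t^n ~ e^{μn} for some μ > 0, then the root magnitudes |ρ±| decay like 1/√(t^n) as n → ∞; more precisely |ρ±| · √(dt_now) converges to a finite nonzero limit determined by λ and the limiting step ratio. -/

import Mathlib

open Filter

/-- The VSSBDF2 characteristic root (± branch, via the principal complex square root
of the discriminant) for step sizes dt_old, dt_now and parameter λ. -/
noncomputable def vssbdf2Root (lam dtold dtnow : ℝ) (sign : ℝ) : ℂ :=
  let ω := dtnow/dtold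
  let A : ℝ := (1 + 2*ω)/(1 + ω) - lam * dtnow
  let disc : ℝ := (1 + ω)^2 - (4*ω^2/(1 + ω)) * A
  (((1 + ω : ℝ) : ℂ) + (sign : ℂ) * ((disc : ℂ) ^ ((1:ℂ)/2))) / (2 * (A : ℂ))

lemma cpow_half_of_neg {x : ℝ} (hx : x < 0) :
    (x : ℂ) ^ ((1:ℂ)/2) = (Real.sqrt (-x) : ℝ) * Complex.I := by
  have hx0 : (x : ℂ) ≠ 0 := by exact_mod_cast hx.ne
  rw [Complex.cpow_def_of_ne_zero hx0]
  have hlog : Complex.log x = (Real.log (-x) : ℝ) + (Real.pi : ℝ) * Complex.I := by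
    apply Complex.ext
    · simp [Complex.log_re, Complex.norm_real, Real.norm_eq_abs, abs_of_neg hx]
    · simp [Complex.log_im, Complex.arg_ofReal_of_neg hx]
  rw [hlog]
  have h2 : ((Real.log (-x) : ℝ) + (Real.pi : ℝ) * Complex.I) * ((1:ℂ)/2)
      = ((Real.log (-x) / 2 : ℝ) : ℂ) + ((Real.pi / 2 : ℝ) : ℂ) * Complex.I := by
    push_cast; ring
  rw [h2, Complex.exp_add, Complex.exp_mul_I]
  have hcos : Real.cos (Real.pi / 2) = 0 := Real.cos_pi_div_two
  have hsin : Real.sin (Real.pi / 2) = 1 := Real.sin_pi_div_two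
  have hexp : Complex.exp ((Real.log (-x) / 2 : ℝ) : ℂ)
      = ((Real.sqrt (-x) : ℝ) : ℂ) := by
    rw [← Complex.ofReal_exp]
    norm_cast
    rw [Real.sqrt_eq_rpow, Real.rpow_def_of_pos (by linarith)]
    ring_nf
  rw [hexp, ← Complex.ofReal_cos, ← Complex.ofReal_sin, hcos, hsin]
  simp

lemma vssbdf2Root_abs (lam dtold dtnow w s : ℝ) (hω : dtnow/dtold = w)
    (hs : s^2 = 1)
    (hA : 0 < (1 + 2*w)/(1 + w) - lam * dtnow)
    (hdisc : (1 + w)^2 - (4*w^2/(1 + w)) * ((1 + 2*w)/(1 + w) - lam * dtnow) < 0) :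
    ‖vssbdf2Root lam dtold dtnow s‖
      = Real.sqrt (w^2 / ((1 + w) * ((1 + 2*w)/(1 + w) - lam * dtnow))) := by
  set A : ℝ := (1 + 2*w)/(1 + w) - lam * dtnow with hAdef
  set disc : ℝ := (1 + w)^2 - (4*w^2/(1 + w)) * A with hdiscdef
  have hroot : vssbdf2Root lam dtold dtnow s
      = (((1 + w : ℝ) : ℂ) + (s : ℂ) * ((disc : ℂ) ^ ((1:ℂ)/2))) / (2 * (A : ℂ)) := by
    simp only [vssbdf2Root, hω]
    rfl
  rw [hroot, cpow_half_of_neg hdisc]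
  have hnum : ((1 + w : ℝ) : ℂ) + (s : ℂ) * (((Real.sqrt (-disc) : ℝ) : ℂ) * Complex.I)
      = ((1 + w : ℝ) : ℂ) + ((s * Real.sqrt (-disc) : ℝ) : ℂ) * Complex.I := by
    push_cast; ring
  rw [hnum, norm_div, Complex.norm_add_mul_I]
  have h2A : ‖2 * (A : ℂ)‖ = 2 * A := by
    rw [norm_mul, Complex.norm_real, Real.norm_eq_abs, abs_of_pos hA]
    simp
  rw [h2A]
  have hsq : (1 + w)^2 + (s * Real.sqrt (-disc))^2 = (2*A)^2 * (w^2 / ((1 + w) * A)) := by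
    have h1 : (s * Real.sqrt (-disc))^2 = -disc := by
      rw [mul_pow, hs, one_mul, Real.sq_sqrt (by linarith)]
    rw [h1, hdiscdef]
    have hw : (1:ℝ) + w ≠ 0 := by
      intro h
      have hz : disc = 0 := by rw [hdiscdef, h]; simp
      linarith
    field_simp
    ring
  rw [hsq, Real.sqrt_mul (sq_nonneg _), Real.sqrt_sq (by linarith)]
  exact mul_div_cancel_left₀ _ (by positivity)

lemma key_general (lam w : ℝ) (hlam : lam < 0) (hw : 1 < w) (t d : ℕ → ℝ)
    (hd : ∀ n, 0 < d n) (hr : ∀ n, t n / d n = w)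
    (htt : Tendsto t atTop atTop) (s : ℝ) (hs : s^2 = 1) :
    Tendsto (fun n => ‖vssbdf2Root lam (d n) (t n) s‖ * Real.sqrt (t n))
      atTop (nhds (Real.sqrt (w^2 / ((1 + w) * (-lam))))) := by
  have hw0 : 0 < w := by linarith
  have hw1 : (0:ℝ) < 1 + w := by linarith
  have hl : 0 < -lam := by linarith
  have ht : ∀ n, 0 < t n := by
    intro n
    have h := hr n
    rw [div_eq_iff (hd n).ne'] at h
    rw [h]; exact mul_pos hw0 (hd n)
  set c : ℝ := (1 + 2*w)/(1 + w) with hc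
  have hcpos : 0 < c := div_pos (by linarith) hw1
  have hApos : ∀ n, 0 < c - lam * t n := by
    intro n
    have : 0 < -lam * t n := mul_pos hl (ht n)
    nlinarith
  have hAtend : Tendsto (fun n => c - lam * t n) atTop atTop := by
    have h1 : Tendsto (fun n => -lam * t n) atTop atTop := htt.const_mul_atTop hl
    have h2 := tendsto_atTop_add_const_left atTop c h1
    refine h2.congr (fun n => by ring)
  -- eventual negativity of the discriminant
  set B : ℝ := (1 + w)^2 / (4*w^2/(1 + w)) with hB
  have hk : 0 < 4*w^2/(1 + w) := div_pos (by positivity) hw1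
  have hAev : ∀ᶠ n in atTop, B < c - lam * t n := hAtend.eventually_gt_atTop B
  have hdiscev : ∀ᶠ n in atTop,
      (1 + w)^2 - (4*w^2/(1 + w)) * (c - lam * t n) < 0 := by
    filter_upwards [hAev] with n hn
    have h1 : (4*w^2/(1 + w)) * B < (4*w^2/(1 + w)) * (c - lam * t n) :=
      mul_lt_mul_of_pos_left hn hk
    have h2 : (4*w^2/(1 + w)) * B = (1 + w)^2 := by
      rw [hB]; field_simp
    linarith
  -- eventual equality with a nice real formula
  have hev : ∀ᶠ n in atTop,
      ‖vssbdf2Root lam (d n) (t n) s‖ * Real.sqrt (t n)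
        = Real.sqrt (w^2 * (t n / ((1 + w) * (c - lam * t n)))) := by
    filter_upwards [hdiscev] with n hn
    rw [vssbdf2Root_abs lam (d n) (t n) w s (hr n) hs (hApos n) hn]
    rw [← Real.sqrt_mul (le_of_lt (div_pos (by positivity) (mul_pos hw1 (hApos n))))]
    congr 1
    rw [div_mul_eq_mul_div, mul_div_assoc]
  -- the limit of the inner expression
  have hinner : Tendsto (fun n => w^2 * (t n / ((1 + w) * (c - lam * t n))))
      atTop (nhds (w^2 / ((1 + w) * (-lam)))) := by
    have hAt : Tendsto (fun n => (c - lam * t n) / t n) atTop (nhds (-lam)) := by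
      have h0 : Tendsto (fun n => c / t n) atTop (nhds 0) :=
        tendsto_const_nhds.div_atTop htt
      have h1 : Tendsto (fun n => c / t n - lam) atTop (nhds (0 - lam)) :=
        h0.sub_const lam
      rw [zero_sub] at h1
      refine h1.congr' ?_
      filter_upwards [htt.eventually_gt_atTop 0] with n hn
      field_simp
    have h2 : Tendsto (fun n => (1 + w) * ((c - lam * t n) / t n)) atTop
        (nhds ((1 + w) * (-lam))) := hAt.const_mul (1 + w)
    have hne : (1 + w) * (-lam) ≠ 0 := (mul_pos hw1 hl).ne'
    have h3 : Tendsto (fun n => w^2 / ((1 + w) * ((c - lam * t n) / t n))) atTop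
        (nhds (w^2 / ((1 + w) * (-lam)))) := tendsto_const_nhds.div h2 hne
    refine h3.congr' ?_
    filter_upwards [htt.eventually_gt_atTop 0] with n hn
    have h4 := (hApos n).ne'
    have h5 := hn.ne'
    field_simp
  have hfin := (Real.continuous_sqrt.tendsto _).comp hinner
  exact Tendsto.congr' (Filter.EventuallyEq.symm hev) hfin

/-- With exponentially growing time steps t^n = e^{μn} (so ω = dt_now/dt_old is bounded,
in fact constant equal to e^μ) and fixed λ < 0, the magnitudes of the VSSBDF2 roots
decay like 1/√(t^n): the products |ρ±|·√(dt_now) converge to a common finite nonzero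
limit determined by λ and the limiting step ratio. -/
theorem vssbdf2_roots_decay_exponential_steps (lam μ : ℝ) (hlam : lam < 0) (hμ : 0 < μ) :
    ∃ L > 0,
      Tendsto (fun n : ℕ =>
          ‖vssbdf2Root lam
              (Real.exp (μ*(n+1)) - Real.exp (μ*n))
              (Real.exp (μ*(n+2)) - Real.exp (μ*(n+1))) 1‖
            * Real.sqrt (Real.exp (μ*(n+2)) - Real.exp (μ*(n+1))))
        atTop (nhds L) ∧
      Tendsto (fun n : ℕ =>
          ‖vssbdf2Root lam
              (Real.exp (μ*(n+1)) - Real.exp (μ*n))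
              (Real.exp (μ*(n+2)) - Real.exp (μ*(n+1))) (-1)‖
            * Real.sqrt (Real.exp (μ*(n+2)) - Real.exp (μ*(n+1))))
        atTop (nhds L) := by
  have hw : 1 < Real.exp μ := Real.one_lt_exp_iff.mpr hμ
  set w := Real.exp μ with hwdef
  have hd : ∀ n : ℕ, 0 < Real.exp (μ*(n+1)) - Real.exp (μ*n) := by
    intro n
    have h : μ*(n:ℝ) < μ*((n:ℝ)+1) := by nlinarith
    exact sub_pos.mpr (Real.exp_lt_exp.mpr h)
  have e2 : ∀ n : ℕ, Real.exp (μ*((n:ℝ)+2)) = Real.exp (μ*((n:ℝ)+1)) * w := by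
    intro n; rw [hwdef, ← Real.exp_add]; congr 1; ring
  have e1 : ∀ n : ℕ, Real.exp (μ*((n:ℝ)+1)) = Real.exp (μ*(n:ℝ)) * w := by
    intro n; rw [hwdef, ← Real.exp_add]; congr 1; ring
  have hr : ∀ n : ℕ, (Real.exp (μ*(n+2)) - Real.exp (μ*(n+1)))
      / (Real.exp (μ*(n+1)) - Real.exp (μ*n)) = w := by
    intro n
    rw [div_eq_iff (hd n).ne', e2 n, e1 n]
    ring
  have htt : Tendsto (fun n : ℕ => Real.exp (μ*(n+2)) - Real.exp (μ*(n+1)))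
      atTop atTop := by
    have h0 : Tendsto (fun n : ℕ => (n:ℝ)) atTop atTop := tendsto_natCast_atTop_atTop
    have h0' : Tendsto (fun n : ℕ => (n:ℝ) + 1) atTop atTop :=
      tendsto_atTop_add_const_right _ 1 h0
    have h1 : Tendsto (fun n : ℕ => μ*((n:ℝ)+1)) atTop atTop := h0'.const_mul_atTop hμ
    have h2 := Real.tendsto_exp_atTop.comp h1
    have h3 : Tendsto (fun n : ℕ => Real.exp (μ*((n:ℝ)+1)) * (w-1)) atTop atTop :=
      h2.atTop_mul_const (by linarith)
    refine h3.congr fun n => ?_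
    rw [e2 n]; ring
  refine ⟨Real.sqrt (w^2 / ((1 + w) * (-lam))), ?_,
    key_general lam w hlam hw _ _ hd hr htt 1 (by norm_num),
    key_general lam w hlam hw _ _ hd hr htt (-1) (by norm_num)⟩
  exact Real.sqrt_pos.mpr (div_pos (by positivity)
    (mul_pos (by linarith) (by linarith)))
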